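/- Let Γ be a connected stable graph of genus i with j legs and at least one edge. Then every vertex v of Γ satisfies (g_v, |v|) < (i, j) in the lexicographic order (g_v < i, or g_v = i and |v| < j). -/

import Mathlib

open Filter Set

/-- A stable graph: a finite set of half-edges, partitioned into (nonempty) vertices
via the equivalence relation `vert`, each vertex carrying a genus (encoded as a
function on half-edges constant on vertices), together with an involution `edgeInv`
of the half-edges whose fixed points are the legs and whose 2-cycles are the edges.
Genus-zero vertices are required to be at least trivalent. -/
structure StableGraph where
  H : Type
  finH : Finite H
  vert : H → H → Prop
  vert_equiv : Equivalence vert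
  genus : H → ℕ
  genus_const : ∀ a b, vert a b → genus a = genus b
  edgeInv : H → H
  invol : ∀ h, edgeInv (edgeInv h) = h
  stable : ∀ h, genus h = 0 → 3 ≤ Nat.card {h' // vert h h'}

namespace StableGraph

variable (Γ : StableGraph)

/-- A half-edge is a leg if it is a fixed point of the edge involution. -/
def IsLeg (h : Γ.H) : Prop := Γ.edgeInv h = h

noncomputable def numLegs : ℕ := Nat.card {h : Γ.H // Γ.IsLeg h}

/-- The number of half-edges at the vertex of `h`. -/
noncomputable def valence (h : Γ.H) : ℕ := Nat.card {h' : Γ.H // Γ.vert h h'}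

noncomputable def numEdges : ℕ := Nat.card {h : Γ.H // ¬ Γ.IsLeg h} / 2

noncomputable def numVertices : ℕ := Nat.card (Quot Γ.vert)

/-- Two half-edges are adjacent if they share a vertex or form an edge. -/
def adj (a b : Γ.H) : Prop := Γ.vert a b ∨ Γ.edgeInv a = b

noncomputable def numComponents : ℕ := Nat.card (Quot (Relation.ReflTransGen Γ.adj))

def Connected : Prop := Γ.numComponents = 1

def sameComp (a b : Γ.H) : Prop := Relation.ReflTransGen Γ.adj a b

noncomputable def sumGenus : ℕ :=
  ∑ᶠ v : Quot Γ.vert, Quot.lift Γ.genus (fun a b h => Γ.genus_const a b h) v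

/-- The genus of a stable graph: `dim H₁(Γ;ℚ) + Σ_v g_v`, where
`dim H₁ = #E − #V + #components`. -/
noncomputable def totalGenus : ℤ :=
  (Γ.numEdges : ℤ) - Γ.numVertices + Γ.numComponents + Γ.sumGenus

/-- A subgraph: a set of edges, encoded as a set of half-edges closed under the
edge involution and containing no legs. -/
structure Subgraph where
  S : Set Γ.H
  closed : ∀ h ∈ S, Γ.edgeInv h ∈ S
  noLegs : ∀ h ∈ S, ¬ Γ.IsLeg h

variable {Γ}

/-- A subgraph is proper if it is a proper subset of the set of edges. -/
def Subgraph.Proper (γ : Γ.Subgraph) : Prop := γ.S ⊂ {h | ¬ Γ.IsLeg h}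

def emptySub (Γ : StableGraph) : Γ.Subgraph :=
  ⟨∅, by simp, by simp⟩

def fullSub (Γ : StableGraph) : Γ.Subgraph :=
  ⟨{h | ¬ Γ.IsLeg h}, by
    intro h hh hc
    apply hh
    have : Γ.edgeInv (Γ.edgeInv h) = Γ.edgeInv h := hc
    rw [Γ.invol] at this
    exact this.symm, fun _ hh => hh⟩

end StableGraph


section AuxQuot
open Relation

private lemma eqvGen_char {Q : Type} {r r' : Q → Q → Prop} {a b : Q}
    (hr' : ∀ x y, r' x y ↔ (x = a ∧ y = b) ∨ r x y)
    {x y : Q} (h : EqvGen r' x y) :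
    EqvGen r x y ∨ (EqvGen r x a ∧ EqvGen r b y) ∨ (EqvGen r x b ∧ EqvGen r a y) := by
  induction h with
  | rel x y h =>
    rcases (hr' x y).1 h with ⟨rfl, rfl⟩ | h
    · exact Or.inr (Or.inl ⟨EqvGen.refl _, EqvGen.refl _⟩)
    · exact Or.inl (EqvGen.rel _ _ h)
  | refl x => exact Or.inl (EqvGen.refl x)
  | symm x y _ ih =>
    rcases ih with h | ⟨h1, h2⟩ | ⟨h1, h2⟩
    · exact Or.inl (EqvGen.symm _ _ h)
    · exact Or.inr (Or.inr ⟨EqvGen.symm _ _ h2, EqvGen.symm _ _ h1⟩)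
    · exact Or.inr (Or.inl ⟨EqvGen.symm _ _ h2, EqvGen.symm _ _ h1⟩)
  | trans x y z _ _ ih1 ih2 =>
    rcases ih1 with h | ⟨h1, h2⟩ | ⟨h1, h2⟩ <;>
      rcases ih2 with h' | ⟨h1', h2'⟩ | ⟨h1', h2'⟩
    · exact Or.inl (EqvGen.trans _ _ _ h h')
    · exact Or.inr (Or.inl ⟨EqvGen.trans _ _ _ h h1', h2'⟩)
    · exact Or.inr (Or.inr ⟨EqvGen.trans _ _ _ h h1', h2'⟩)
    · exact Or.inr (Or.inl ⟨h1, EqvGen.trans _ _ _ h2 h'⟩)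
    · exact Or.inl (EqvGen.trans _ _ _ h1 (EqvGen.trans _ _ _
        (EqvGen.symm _ _ (EqvGen.trans _ _ _ h2 h1')) h2'))
    · exact Or.inl (EqvGen.trans _ _ _ h1 h2')
    · exact Or.inr (Or.inr ⟨h1, EqvGen.trans _ _ _ h2 h'⟩)
    · exact Or.inl (EqvGen.trans _ _ _ h1 h2')
    · exact Or.inl (EqvGen.trans _ _ _ h1
        (EqvGen.trans _ _ _ (EqvGen.symm _ _ (EqvGen.trans _ _ _ h2 h1')) h2'))

private lemma card_quot_one_pair {Q : Type} [Finite Q] {r r' : Q → Q → Prop} {a b : Q}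
    (hr' : ∀ x y, r' x y ↔ (x = a ∧ y = b) ∨ r x y) :
    Nat.card (Quot (EqvGen r)) ≤ Nat.card (Quot (EqvGen r')) + 1 := by
  classical
  have hTe : Equivalence (EqvGen r) := Relation.EqvGen.is_equivalence r
  have hmono : ∀ x y, EqvGen r x y → EqvGen r' x y := fun x y h =>
    Relation.EqvGen.mono (fun u v huv => (hr' u v).2 (Or.inr huv)) _ _ h
  have hfin : Finite (Quot (EqvGen r')) := Finite.of_surjective _ (Quot.mk_surjective (r := EqvGen r'))
  set f : Quot (EqvGen r) → (Quot (EqvGen r')) ⊕ Unit :=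
    Quot.lift (fun x => if EqvGen r x b then Sum.inr () else Sum.inl (Quot.mk _ x))
      (by
        intro x y hxy
        by_cases hx : EqvGen r x b
        · rw [if_pos hx, if_pos (hTe.trans (hTe.symm hxy) hx)]
        · rw [if_neg hx, if_neg (fun hy => hx (hTe.trans hxy hy))]
          exact congrArg Sum.inl (Quot.sound (hmono _ _ hxy))) with hf
  have hinj : Function.Injective f := by
    intro u v
    induction u using Quot.ind with | _ x =>
    induction v using Quot.ind with | _ y =>
    intro huv
    simp only [hf] at huv
    by_cases hx : EqvGen r x b <;> by_cases hy : EqvGen r y b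
    · exact Quot.sound (hTe.trans hx (hTe.symm hy))
    · rw [if_pos hx, if_neg hy] at huv; exact absurd huv (by simp)
    · rw [if_neg hx, if_pos hy] at huv; exact absurd huv (by simp)
    · rw [if_neg hx, if_neg hy] at huv
      have h1 : Quot.mk (EqvGen r') x = Quot.mk (EqvGen r') y := by
        simpa using huv
      have h2 : EqvGen r' x y :=
        ((Relation.EqvGen.is_equivalence r').eqvGen_iff).1 (Quot.eq.1 h1)
      rcases eqvGen_char hr' h2 with h | ⟨p1, p2⟩ | ⟨p1, p2⟩
      · exact Quot.sound h
      · exact absurd (hTe.symm p2) hy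
      · exact absurd p1 hx
  calc Nat.card (Quot (EqvGen r)) ≤ Nat.card ((Quot (EqvGen r')) ⊕ Unit) :=
        Nat.card_le_card_of_injective f hinj
    _ = Nat.card (Quot (EqvGen r')) + 1 := by simp [Nat.card_sum]

private lemma card_quot_list {Q : Type} [Finite Q] (L : List (Q × Q)) :
    Nat.card Q ≤ Nat.card (Quot (EqvGen (fun x y => (x, y) ∈ L))) + L.length := by
  induction L with
  | nil =>
    have hid : ∀ x y : Q, EqvGen (fun x y : Q => (x, y) ∈ ([] : List (Q × Q))) x y → x = y := by
      intro x y h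
      induction h with
      | rel x y h => simp at h
      | refl x => rfl
      | symm x y _ ih => exact ih.symm
      | trans x y z _ _ ih1 ih2 => exact ih1.trans ih2
    have hinj : Function.Injective
        (Quot.mk (EqvGen (fun x y : Q => (x, y) ∈ ([] : List (Q × Q))))) := by
      intro x y hxy
      exact hid _ _ (((Relation.EqvGen.is_equivalence _).eqvGen_iff).1 (Quot.eq.1 hxy))
    simpa using Nat.card_le_card_of_injective _ hinj
  | cons p l ih =>
    obtain ⟨a, b⟩ := p
    have h1 := card_quot_one_pair (Q := Q) (r := fun x y => (x, y) ∈ l)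
      (r' := fun x y => (x, y) ∈ (a, b) :: l) (a := a) (b := b)
      (by intro x y; simp [Prod.ext_iff])
    simp only [List.length_cons]
    omega

end AuxQuot

open StableGraph in
/-- If `Γ` is a connected stable graph of genus `i` with `j` legs and at least
one edge, then every vertex `v` of `Γ` satisfies `(g_v, |v|) < (i, j)` in the
lexicographic order. (Here the vertex of the half-edge `h` has genus
`Γ.genus h` and valence `Γ.valence h`.) -/

theorem statement_10 (Γ : StableGraph) (i j : ℕ)
    (hconn : Γ.Connected) (hg : Γ.totalGenus = (i : ℤ)) (hl : Γ.numLegs = j)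
    (he : 1 ≤ Γ.numEdges) (h : Γ.H) :
    Γ.genus h < i ∨ (Γ.genus h = i ∧ Γ.valence h < j) := by
  classical
  have finH : Finite Γ.H := Γ.finH
  have : Fintype Γ.H := Fintype.ofFinite _
  have hconn' : Γ.numComponents = 1 := hconn
  set q : Γ.H → Quot Γ.vert := Quot.mk Γ.vert with hq
  have finQ : Finite (Quot Γ.vert) := Finite.of_surjective q Quot.mk_surjective
  have : Fintype (Quot Γ.vert) := Fintype.ofFinite _
  have qeq : ∀ a b, q a = q b ↔ Γ.vert a b := fun a b =>
    Quot.eq.trans Γ.vert_equiv.eqvGen_iff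
  -- fiber cardinalities of the vertex map
  set fib : Quot Γ.vert → ℕ :=
    fun v => (Finset.univ.filter fun x => q x = v).card with hfib
  have valence_eq : ∀ x, Γ.valence x = fib (q x) := by
    intro x
    rw [StableGraph.valence, Nat.card_eq_fintype_card, Fintype.card_subtype]
    simp only [hfib]
    congr 1
    apply Finset.filter_congr
    intro y _
    constructor
    · intro hv; exact ((qeq y x).2 (Γ.vert_equiv.symm hv))
    · intro hv; exact Γ.vert_equiv.symm ((qeq y x).1 hv)
  have sum_fib : ∑ v : Quot Γ.vert, fib v = Fintype.card Γ.H :=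
    (Finset.card_eq_sum_card_fiberwise (fun x _ => Finset.mem_univ (q x))).symm
  -- choosing an orientation for each edge
  set f0 : Γ.H → ℕ := fun x => (Fintype.equivFin Γ.H x : ℕ) with hf0
  have f0inj : Function.Injective f0 := fun a b hab => by
    apply (Fintype.equivFin Γ.H).injective
    exact Fin.ext hab
  have nonleg_ne : ∀ x, ¬ Γ.IsLeg x → Γ.edgeInv x ≠ x := fun x hx => fun hc => hx hc
  have nonleg_sigma : ∀ x, ¬ Γ.IsLeg x → ¬ Γ.IsLeg (Γ.edgeInv x) := by
    intro x hx hc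
    apply hx
    have h2 : Γ.edgeInv (Γ.edgeInv x) = Γ.edgeInv x := hc
    rw [Γ.invol] at h2
    exact h2.symm
  set E : Finset Γ.H :=
    Finset.univ.filter (fun x => ¬ Γ.IsLeg x ∧ f0 x < f0 (Γ.edgeInv x)) with hE
  set E' : Finset Γ.H :=
    Finset.univ.filter (fun x => ¬ Γ.IsLeg x ∧ f0 (Γ.edgeInv x) < f0 x) with hE'
  have cardEE' : E.card = E'.card := by
    apply Finset.card_bij' (fun x _ => Γ.edgeInv x) (fun x _ => Γ.edgeInv x)
    · intro x hx
      simp only [hE, hE', Finset.mem_filter, Finset.mem_univ, true_and] at hx ⊢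
      exact ⟨nonleg_sigma x hx.1, by rw [Γ.invol]; exact hx.2⟩
    · intro x hx
      simp only [hE, hE', Finset.mem_filter, Finset.mem_univ, true_and] at hx ⊢
      exact ⟨nonleg_sigma x hx.1, by rw [Γ.invol]; exact hx.2⟩
    · intro x _; exact Γ.invol x
    · intro x _; exact Γ.invol x
  have nonleg_split :
      (Finset.univ.filter fun x : Γ.H => ¬ Γ.IsLeg x).card = E.card + E'.card := by
    have hsplit := Finset.card_filter_add_card_filter_not
      (s := Finset.univ.filter fun x : Γ.H => ¬ Γ.IsLeg x)
      (p := fun x => f0 x < f0 (Γ.edgeInv x))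
    rw [← hsplit, hE, hE']
    congr 1
    · rw [Finset.filter_filter]
    · rw [Finset.filter_filter]
      congr 1
      apply Finset.filter_congr
      intro x _
      constructor
      · rintro ⟨hx, hlt⟩
        refine ⟨hx, ?_⟩
        rcases lt_or_gt_of_ne (fun hc : f0 x = f0 (Γ.edgeInv x) =>
          (nonleg_ne x hx) (f0inj hc).symm) with h1 | h1
        · exact absurd h1 hlt
        · exact h1
      · rintro ⟨hx, hlt⟩
        exact ⟨hx, fun hc => absurd (hc.trans hlt) (lt_irrefl _)⟩
  have numEdges_eq : Γ.numEdges = E.card := by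
    rw [StableGraph.numEdges, Nat.card_eq_fintype_card, Fintype.card_subtype, nonleg_split,
      ← cardEE']
    omega
  -- total count of half-edges
  have cardH : Fintype.card Γ.H = Γ.numLegs + 2 * Γ.numEdges := by
    rw [StableGraph.numLegs, Nat.card_eq_fintype_card, Fintype.card_subtype, numEdges_eq]
    have hsplit := Finset.card_filter_add_card_filter_not
      (s := (Finset.univ : Finset Γ.H)) (p := fun x => Γ.IsLeg x)
    rw [Finset.card_univ] at hsplit
    omega
  -- connectivity implies #V ≤ #E + 1
  have hVE : Γ.numVertices ≤ Γ.numEdges + 1 := by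
    set L : List (Quot Γ.vert × Quot Γ.vert) := E.toList.map (fun x => (q x, q (Γ.edgeInv x))) with hL
    set relL : Quot Γ.vert → Quot Γ.vert → Prop := fun x y => (x, y) ∈ L with hrelL
    have hmem : ∀ x ∈ E, relL (q x) (q (Γ.edgeInv x)) := by
      intro x hx
      simp only [hrelL, hL, List.mem_map]
      exact ⟨x, by simpa using hx, rfl⟩
    have hdesc : ∀ a b, Γ.adj a b →
        Quot.mk (Relation.EqvGen relL) (q a) = Quot.mk (Relation.EqvGen relL) (q b) := by
      intro a b hab
      rcases hab with hv | hv
      · rw [(qeq a b).2 hv]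
      · subst hv
        by_cases hleg : Γ.IsLeg a
        · rw [show Γ.edgeInv a = a from hleg]
        · rcases lt_or_gt_of_ne (fun hc : f0 a = f0 (Γ.edgeInv a) =>
            (nonleg_ne a hleg) (f0inj hc).symm) with h1 | h1
          · exact Quot.sound (Relation.EqvGen.rel _ _ (hmem a (by
              simp only [hE, Finset.mem_filter, Finset.mem_univ, true_and]
              exact ⟨hleg, h1⟩)))
          · have hmem2 : relL (q (Γ.edgeInv a)) (q a) := by
              have h2 := hmem (Γ.edgeInv a) (by
                simp only [hE, Finset.mem_filter, Finset.mem_univ, true_and]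
                refine ⟨nonleg_sigma a hleg, ?_⟩
                rw [show Γ.edgeInv (Γ.edgeInv a) = a from Γ.invol a]
                exact h1)
              rwa [show Γ.edgeInv (Γ.edgeInv a) = a from Γ.invol a] at h2
            exact Quot.sound (Relation.EqvGen.symm _ _ (Relation.EqvGen.rel _ _ hmem2))
    have hψ : ∀ a b, Relation.ReflTransGen Γ.adj a b →
        Quot.mk (Relation.EqvGen relL) (q a) = Quot.mk (Relation.EqvGen relL) (q b) := by
      intro a b hab
      induction hab with
      | refl => rfl
      | tail h1 h2 ih => exact ih.trans (hdesc _ _ h2)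
    set ψ : Quot (Relation.ReflTransGen Γ.adj) → Quot (Relation.EqvGen relL) :=
      Quot.lift (fun x => Quot.mk (Relation.EqvGen relL) (q x)) hψ with hψdef
    have hsurj : Function.Surjective ψ := by
      intro y
      induction y using Quot.ind with | _ v =>
      induction v using Quot.ind with | _ x =>
      exact ⟨Quot.mk _ x, rfl⟩
    have h1 : Nat.card (Quot (Relation.EqvGen relL)) ≤ Γ.numComponents :=
      Nat.card_le_card_of_surjective ψ hsurj
    have h2 : Nat.card (Quot Γ.vert) ≤ Nat.card (Quot (Relation.EqvGen relL)) + L.length := by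
      rw [hrelL]
      exact card_quot_list L
    have h3 : L.length = Γ.numEdges := by
      rw [hL, List.length_map, Finset.length_toList, numEdges_eq]
    rw [StableGraph.numVertices]
    rw [hconn'] at h1
    omega
  -- sum of genera
  set G : Quot Γ.vert → ℕ := Quot.lift Γ.genus (fun a b hab => Γ.genus_const a b hab) with hG
  have sumG : Γ.sumGenus = ∑ v : Quot Γ.vert, G v := finsum_eq_sum_of_fintype _
  have hgS : Γ.genus h ≤ Γ.sumGenus := by
    rw [sumG]
    exact Finset.single_le_sum (f := G) (fun v _ => Nat.zero_le _) (Finset.mem_univ (q h))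
  by_cases hgi : Γ.genus h < i
  · exact Or.inl hgi
  right
  have htot : (Γ.numEdges : ℤ) - Γ.numVertices + 1 + Γ.sumGenus = i := by
    rw [StableGraph.totalGenus, hconn'] at hg
    push_cast at hg ⊢
    linarith
  have key : Γ.genus h = i ∧ Γ.sumGenus = Γ.genus h ∧ Γ.numVertices = Γ.numEdges + 1 := by
    omega
  obtain ⟨hgeq, hSeq, hVeq⟩ := key
  refine ⟨hgeq, ?_⟩
  -- all other vertices have genus 0
  have hsum0 : ∑ v ∈ Finset.univ.erase (q h), G v = 0 := by
    have h1 := Finset.sum_erase_add Finset.univ G (Finset.mem_univ (q h))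
    have hGh : G (q h) = Γ.genus h := rfl
    rw [hGh, ← sumG, hSeq] at h1
    omega
  have hG0 : ∀ v ∈ Finset.univ.erase (q h), G v = 0 := Finset.sum_eq_zero_iff.1 hsum0
  -- every other vertex has valence at least 3
  have hfib3 : ∀ v ∈ Finset.univ.erase (q h), 3 ≤ fib v := by
    intro v hv
    induction v using Quot.ind with | _ x =>
    have hx0 : Γ.genus x = 0 := hG0 _ hv
    have h3 : 3 ≤ Γ.valence x := Γ.stable x hx0
    rw [valence_eq] at h3
    exact h3
  have hcount : 3 * Γ.numEdges ≤ ∑ v ∈ Finset.univ.erase (q h), fib v := by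
    have h1 := Finset.card_nsmul_le_sum (Finset.univ.erase (q h)) fib 3 hfib3
    have hcard : (Finset.univ.erase (q h)).card = Γ.numEdges := by
      rw [Finset.card_erase_of_mem (Finset.mem_univ _), Finset.card_univ]
      have h2 : Nat.card (Quot Γ.vert) = Fintype.card (Quot Γ.vert) :=
        Nat.card_eq_fintype_card
      rw [StableGraph.numVertices] at hVeq
      omega
    rw [hcard] at h1
    simpa [smul_eq_mul, mul_comm] using h1
  have hsplit2 : fib (q h) + ∑ v ∈ Finset.univ.erase (q h), fib v
      = Γ.numLegs + 2 * Γ.numEdges := by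
    have h1 := Finset.sum_erase_add Finset.univ fib (Finset.mem_univ (q h))
    rw [sum_fib, cardH] at h1
    omega
  rw [valence_eq]
  omega
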